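/- Let X be a real d_r × d_c matrix, and let J_r (d_r × k_r) and J_c (d_c × k_c) have orthonormal columns. Set A* = J_rᵀ X J_c. Then for every real k_r × k_c matrix A, ‖X − J_r A J_cᵀ‖_F² = ‖X − J_r A* J_cᵀ‖_F² + ‖A* − A‖_F². -/
import Mathlib


open Matrix BigOperators

/-- Squared Frobenius norm of a real matrix: `∑ i, ∑ j, (X i j)^2`. -/
noncomputable def frobSq {m n : ℕ} (X : Matrix (Fin m) (Fin n) ℝ) : ℝ :=
  ∑ i, ∑ j, (X i j) ^ 2

lemma frobSq_eq_trace {m n : ℕ} (X : Matrix (Fin m) (Fin n) ℝ) :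
    frobSq X = (Xᵀ * X).trace := by
  simp only [frobSq, Matrix.trace, Matrix.diag, Matrix.mul_apply, Matrix.transpose_apply, sq]
  exact Finset.sum_comm

/-- Pythagorean identity for the tri-factorization objective: with `A* = J_rᵀ X J_c`,
`‖X − J_r A J_cᵀ‖_F² = ‖X − J_r A* J_cᵀ‖_F² + ‖A* − A‖_F²` for every `A`. -/
theorem frobSq_triFactor_pythagoras {dr dc kr kc : ℕ}
    (X : Matrix (Fin dr) (Fin dc) ℝ)
    (Jr : Matrix (Fin dr) (Fin kr) ℝ) (Jc : Matrix (Fin dc) (Fin kc) ℝ)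
    (hJr : Jrᵀ * Jr = 1) (hJc : Jcᵀ * Jc = 1)
    (Astar : Matrix (Fin kr) (Fin kc) ℝ) (hAstar : Astar = Jrᵀ * X * Jc)
    (A : Matrix (Fin kr) (Fin kc) ℝ) :
    frobSq (X - Jr * A * Jcᵀ) = frobSq (X - Jr * Astar * Jcᵀ) + frobSq (Astar - A) := by
  set E := X - Jr * Astar * Jcᵀ with hE
  set D := Astar - A with hD
  have hdecomp : X - Jr * A * Jcᵀ = E + Jr * D * Jcᵀ := by
    simp only [hE, hD, Matrix.mul_sub, Matrix.sub_mul]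
    abel
  -- key: Jrᵀ * E * Jc = 0
  have hkey : Jrᵀ * E * Jc = 0 := by
    simp only [hE, hAstar, Matrix.mul_sub, Matrix.sub_mul]
    have : Jrᵀ * (Jr * (Jrᵀ * X * Jc) * Jcᵀ) * Jc
        = (Jrᵀ * Jr) * (Jrᵀ * X * Jc) * (Jcᵀ * Jc) := by
      simp only [Matrix.mul_assoc]
    rw [this, hJr, hJc, Matrix.one_mul, Matrix.mul_one, sub_self]
  rw [hdecomp, frobSq_eq_trace, frobSq_eq_trace, frobSq_eq_trace]
  have expand : (E + Jr * D * Jcᵀ)ᵀ * (E + Jr * D * Jcᵀ)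
      = Eᵀ * E + Eᵀ * (Jr * D * Jcᵀ) + (Jr * D * Jcᵀ)ᵀ * E
        + (Jr * D * Jcᵀ)ᵀ * (Jr * D * Jcᵀ) := by
    simp [Matrix.add_mul, Matrix.mul_add]
    abel
  rw [expand]
  simp only [Matrix.trace_add]
  have hcross : (Eᵀ * (Jr * D * Jcᵀ)).trace = 0 := by
    have : Eᵀ * (Jr * D * Jcᵀ) = (Eᵀ * Jr * D) * Jcᵀ := by
      simp only [Matrix.mul_assoc]
    rw [this, Matrix.trace_mul_comm]
    have : Jcᵀ * (Eᵀ * Jr * D) = (Jrᵀ * E * Jc)ᵀ * D := by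
      simp [Matrix.transpose_mul, Matrix.mul_assoc]
    rw [this, hkey]
    simp
  have hcross' : ((Jr * D * Jcᵀ)ᵀ * E).trace = 0 := by
    have h1 : (Jr * D * Jcᵀ)ᵀ * E = (Eᵀ * (Jr * D * Jcᵀ))ᵀ := by
      simp [Matrix.transpose_mul]
    rw [h1, Matrix.trace_transpose, hcross]
  have hlast : ((Jr * D * Jcᵀ)ᵀ * (Jr * D * Jcᵀ)).trace = (Dᵀ * D).trace := by
    have h1 : (Jr * D * Jcᵀ)ᵀ * (Jr * D * Jcᵀ)
        = Jc * (Dᵀ * ((Jrᵀ * Jr) * D) * Jcᵀ) := by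
      simp [Matrix.transpose_mul, Matrix.mul_assoc]
    rw [h1, Matrix.trace_mul_comm, hJr]
    simp only [Matrix.one_mul, Matrix.mul_assoc, ← Matrix.mul_assoc Jcᵀ]
    simp [hJc]
  rw [hcross, hcross', hlast]
  ring
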